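/- Let Y be a closed subset of a proper geodesic metric space X, c a cocycle in the horocompactification X̄ admitting a projection q on Y (i.e. c(q, y) ≤ 0 for all y ∈ Y), and γ a gradient arc for c starting at q. Then for every t in the domain of γ, the point q is a nearest-point projection of γ(t) on Y. -/

import Mathlib

open Metric Set MeasureTheory

variable {X : Type*} [MetricSpace X]

/-- A map `γ` is a geodesic on the parameter set `s`. -/
def IsGeodesicOn (γ : ℝ → X) (s : Set ℝ) : Prop :=
  ∀ t ∈ s, ∀ t' ∈ s, dist (γ t) (γ t') = |t - t'|

/-- The set of nearest-point projections of points of `Z` onto `Y`. -/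
def projSet (Y Z : Set X) : Set X :=
  {y | y ∈ Y ∧ ∃ z ∈ Z, dist z y = Metric.infDist z Y}

/-- `Y` is an `α`-contracting closed subset: any geodesic at distance `≥ α` from `Y`
has projection onto `Y` of diameter `≤ α`. -/
def IsContractingSet (α : ℝ) (Y : Set X) : Prop :=
  IsClosed Y ∧ ∀ (γ : ℝ → X) (s : Set ℝ), IsGeodesicOn γ s →
    (∀ t ∈ s, α ≤ Metric.infDist (γ t) Y) →
    Metric.diam (projSet Y (γ '' s)) ≤ α

/-- `X` is a geodesic space: any two points are joined by a geodesic. -/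
def GeodesicSpace (X : Type*) [MetricSpace X] : Prop :=
  ∀ x y : X, ∃ γ : ℝ → X, γ 0 = x ∧ γ (dist x y) = y ∧
    IsGeodesicOn γ (Set.Icc 0 (dist x y))

/-- The Busemann cocycle associated to the point `z`. -/
def busemann (z : X) : X → X → ℝ := fun x y => dist x z - dist y z

/-- The horocompactification of `X`: the closure of the set of Busemann cocycles. -/
def horocompactification (X : Type*) [MetricSpace X] : Set (X → X → ℝ) :=
  closure (Set.range (busemann (X := X)))

/-- The horoboundary of `X`. -/
def horoboundary (X : Type*) [MetricSpace X] : Set (X → X → ℝ) :=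
  horocompactification X \ Set.range (busemann (X := X))


lemma horo_cocycle {c : X → X → ℝ} (hc : c ∈ horocompactification X) :
    ∀ x y z : X, c x z = c x y + c y z := by
  intro x y z
  have hclosed : IsClosed {f : X → X → ℝ | f x z = f x y + f y z} :=
    isClosed_eq ((continuous_apply z).comp (continuous_apply x))
      (((continuous_apply y).comp (continuous_apply x)).fun_add
        ((continuous_apply z).comp (continuous_apply y)))
  have hsub : Set.range (busemann (X := X)) ⊆ {f : X → X → ℝ | f x z = f x y + f y z} := by
    rintro f ⟨w, rfl⟩
    simp only [busemann, Set.mem_setOf_eq]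
    ring
  exact closure_minimal hsub hclosed hc

lemma horo_lipschitz {c : X → X → ℝ} (hc : c ∈ horocompactification X) :
    ∀ x y : X, c x y ≤ dist x y := by
  intro x y
  have hclosed : IsClosed {f : X → X → ℝ | f x y ≤ dist x y} :=
    isClosed_le ((continuous_apply y).comp (continuous_apply x)) continuous_const
  have hsub : Set.range (busemann (X := X)) ⊆ {f : X → X → ℝ | f x y ≤ dist x y} := by
    rintro f ⟨w, rfl⟩
    simp only [busemann, Set.mem_setOf_eq]
    have := dist_triangle x y w
    linarith
  exact closure_minimal hsub hclosed hc

/-- If `q` is a projection of the cocycle `c` on the closed set `Y` and `γ` is a gradient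
arc for `c` starting at `q`, then `q` is a nearest-point projection of each `γ t` on `Y`. -/
theorem proj_gradient_arc [ProperSpace X] (hX : GeodesicSpace X)
    {Y : Set X} (hY : IsClosed Y) {c : X → X → ℝ} (hc : c ∈ horocompactification X)
    {q : X} (hq : q ∈ Y) (hproj : ∀ y ∈ Y, c q y ≤ 0)
    (γ : ℝ → X) (I : Set ℝ) (hI0 : (0 : ℝ) ∈ I) (hInn : ∀ t ∈ I, 0 ≤ t)
    (hstart : γ 0 = q)
    (hgrad : ∀ s ∈ I, ∀ t ∈ I, s ≤ t →
      dist (γ s) (γ t) = t - s ∧ c (γ s) (γ t) = t - s) :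
    ∀ t ∈ I, dist (γ t) q = Metric.infDist (γ t) Y := by
  intro t ht
  have ht0 : 0 ≤ t := hInn t ht
  obtain ⟨hd, hcv⟩ := hgrad 0 hI0 t ht ht0
  have hco := horo_cocycle hc
  have hle := horo_lipschitz hc
  have hcxx : ∀ x : X, c x x = 0 := by
    intro x; have := hco x x x; linarith
  have hanti : ∀ x y : X, c y x = - c x y := by
    intro x y; have h1 := hco x y x; have h2 := hcxx x; linarith
  have hdq : dist (γ t) q = t := by
    rw [dist_comm, ← hstart]; rw [hd]; ring
  rw [hdq]
  refine le_antisymm ?_ ?_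
  · by_contra h
    push_neg at h
    obtain ⟨y, hy, hlt⟩ := (Metric.infDist_lt_iff ⟨q, hq⟩).mp h
    revert hlt
    simp only [not_lt, imp_false, not_lt]
    have h1 : c y (γ t) = c y q + c q (γ t) := hco y q (γ t)
    have h2 : c q (γ t) = t := by rw [← hstart]; rw [hcv]; ring
    have h3 : 0 ≤ c y q := by have := hproj y hy; rw [hanti y q] at *; linarith [hanti q y]
    have h4 := hle y (γ t)
    rw [dist_comm] at h4
    linarith
  · calc Metric.infDist (γ t) Y ≤ dist (γ t) q := Metric.infDist_le_dist_of_mem hq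
      _ = t := hdq
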